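/- arXiv:2102.10667 — 3 statements merged into one kernel-verified Lean document; each statement's English description precedes it below -/
import Mathlib

section
/- Let M be a 2×2 real symmetric positive definite matrix with entries m11, m12, m12, m22, and let b, c be real numbers. Then ((m22 - c)^2 + (b(m22 - c) - c(m12 - b))^2 / det(M)) / m22 ≥ (m12 - b)^2 / m11. -/
theorem stmt0 (m11 m12 m22 b c : ℝ)
    (h11 : 0 < m11) (h22 : 0 < m22)
    (hdet : 0 < m11 * m22 - m12 ^ 2) :
    ((m22 - c) ^ 2 + (b * (m22 - c) - c * (m12 - b)) ^ 2 / (m11 * m22 - m12 ^ 2)) / m22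
      ≥ (m12 - b) ^ 2 / m11 := by
  rw [ge_iff_le, div_le_div_iff₀ h11 h22]
  have h : (b * (m22 - c) - c * (m12 - b)) ^ 2 / (m11 * m22 - m12 ^ 2)
      = (m12 * (m22 - c) - m22 * (m12 - b)) ^ 2 / (m11 * m22 - m12 ^ 2) := by
    ring_nf
  rw [h, ← sub_nonneg]
  have key : ((m22 - c) ^ 2 + (m12 * (m22 - c) - m22 * (m12 - b)) ^ 2 /
      (m11 * m22 - m12 ^ 2)) * m11 - (m12 - b) ^ 2 * m22
      = m22 * (m11 * (m22 - c) - m12 * (m12 - b)) ^ 2 / (m11 * m22 - m12 ^ 2) := by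
    rw [add_div' _ _ _ hdet.ne', div_mul_eq_mul_div, div_sub' hdet.ne', div_left_inj' hdet.ne']
    ring
  rw [key]
  positivity
end

section
/- Let M be a 2×2 real symmetric positive definite matrix with entries m11, m12, m12, m22, and let b, c be real numbers. Equality holds in the inequality ((m22 - c)^2 + (b(m22 - c) - c(m12 - b))^2 / det(M)) / m22 ≥ (m12 - b)^2 / m11 if and only if m22 = c + (m12 - b)*m12 / m11. -/
theorem stmt1 (m11 m12 m22 b c : ℝ)
    (h11 : 0 < m11) (h22 : 0 < m22)
    (hdet : 0 < m11 * m22 - m12 ^ 2) :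
    ((m22 - c) ^ 2 + (b * (m22 - c) - c * (m12 - b)) ^ 2 / (m11 * m22 - m12 ^ 2)) / m22
      = (m12 - b) ^ 2 / m11
    ↔ m22 = c + (m12 - b) * m12 / m11 := by
  have hD : (m11 * m22 - m12 ^ 2) ≠ 0 := ne_of_gt hdet
  have h11' : m11 ≠ 0 := ne_of_gt h11
  have h22' : m22 ≠ 0 := ne_of_gt h22
  rw [div_eq_div_iff h22' h11', ← sub_eq_zero]
  have key : ((m22 - c) ^ 2 + (b * (m22 - c) - c * (m12 - b)) ^ 2 / (m11 * m22 - m12 ^ 2)) * m11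
      - (m12 - b) ^ 2 * m22
      = m22 * (m11 * (m22 - c) - m12 * (m12 - b)) ^ 2 / (m11 * m22 - m12 ^ 2) := by
    rw [eq_div_iff hD, sub_mul, add_mul, add_mul, div_mul_eq_mul_div, div_mul_eq_mul_div,
      mul_div_cancel_right₀ _ hD]
    ring
  rw [key, div_eq_zero_iff, or_iff_left hD, mul_eq_zero, or_iff_right h22',
    pow_eq_zero_iff (two_ne_zero), sub_eq_zero]
  constructor
  · intro h
    field_simp
    linarith [h]
  · intro h
    field_simp at h
    linarith [h]
end

section
/- Let U(x) = α·x²/2 + ψ(x) with ψ ∈ C^1(R) supported in [-R, R], and suppose 2‖ψ'‖_∞ < α. Let B(x,v) = (v, -U'(x) - v) and let A = [[b + cα, b],[b, c]] with c = 2b > 0. If z1' = (x1', v1'), z2' = (x2', v2') satisfy |x1'| ≥ R+1 or |x2'| ≥ R+1 and moreover ‖ψ'‖_∞ < 1/2, then -⟨B(z1') - B(z2'), z1' - z2'⟩_A ≥ c·κ1·|z1' - z2'|², where κ1 = min(1/2 - ‖ψ'‖_∞, (α - 2‖ψ'‖_∞)/2) > 0. -/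
set_option maxHeartbeats 1000000

lemma far_bound (R K : ℝ) (p : ℝ → ℝ) (hR : 0 < R)
    (hsupp : ∀ x : ℝ, R < |x| → p x = 0)
    (hK : ∀ x : ℝ, |p x| ≤ K)
    (x1 x2 : ℝ) (h : R + 1 ≤ |x1|) :
    |p x1 - p x2| ≤ K * |x1 - x2| := by
  have hK0 : 0 ≤ K := le_trans (abs_nonneg _) (hK 0)
  have h1 : p x1 = 0 := hsupp x1 (by linarith)
  rcases le_or_gt |x2| R with h2 | h2
  · have hd : 1 ≤ |x1 - x2| := by
      have := abs_sub_abs_le_abs_sub x1 x2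
      linarith
    rw [h1, zero_sub, abs_neg]
    calc |p x2| ≤ K := hK x2
      _ = K * 1 := (mul_one K).symm
      _ ≤ K * |x1 - x2| := by nlinarith
  · rw [h1, hsupp x2 h2, sub_zero, abs_zero]
    positivity

/-- Coercivity of the drift far from the support of the perturbation.
`p = ψ'`, `K = ‖ψ'‖_∞`, `A = [[b + cα, b],[b, c]]` with `c = 2b`, and
`⟨u, w⟩_A = u ⬝ (A w)`. -/
theorem stmt10 (α R b c K : ℝ) (p : ℝ → ℝ)
    (hb : 0 < b) (hc : c = 2 * b) (hR : 0 < R)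
    (hsupp : ∀ x : ℝ, R < |x| → p x = 0)
    (hK : ∀ x : ℝ, |p x| ≤ K)
    (hKα : 2 * K < α) (hKhalf : K < 1 / 2)
    (x1 v1 x2 v2 : ℝ)
    (hfar : R + 1 ≤ |x1| ∨ R + 1 ≤ |x2|) :
    let a : ℝ := b + c * α
    let κ1 : ℝ := min (1 / 2 - K) ((α - 2 * K) / 2)
    -- components of B z1 - B z2
    let u1 : ℝ := v1 - v2
    let u2 : ℝ := -(α * x1 + p x1) - v1 - (-(α * x2 + p x2) - v2)
    -- components of z1 - z2
    let w1 : ℝ := x1 - x2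
    let w2 : ℝ := v1 - v2
    0 < κ1 ∧
    -(u1 * (a * w1 + b * w2) + u2 * (b * w1 + c * w2))
      ≥ c * κ1 * ((x1 - x2) ^ 2 + (v1 - v2) ^ 2) := by
  intro a κ1 u1 u2 w1 w2
  have hK0 : 0 ≤ K := le_trans (abs_nonneg _) (hK 0)
  have hΔp : |p x1 - p x2| ≤ K * |x1 - x2| := by
    rcases hfar with h | h
    · exact far_bound R K p hR hsupp hK x1 x2 h
    · have := far_bound R K p hR hsupp hK x2 x1 h
      rwa [abs_sub_comm (p x2), abs_sub_comm x2] at this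
  have habs := abs_le.mp hΔp
  have hx : |x1 - x2| ^ 2 = (x1 - x2) ^ 2 := sq_abs _
  have hxa : 0 ≤ |x1 - x2| := abs_nonneg _
  have hva : |v1 - v2| ≤ |v1 - v2| := le_refl _
  have h1 : κ1 ≤ 1 / 2 - K := min_le_left _ _
  have h2 : κ1 ≤ (α - 2 * K) / 2 := min_le_right _ _
  have hκpos : 0 < κ1 := lt_min (by linarith) (by linarith)
  refine ⟨hκpos, ?_⟩
  show -(u1 * (a * w1 + b * w2) + u2 * (b * w1 + c * w2))
      ≥ c * κ1 * ((x1 - x2) ^ 2 + (v1 - v2) ^ 2)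
  simp only [u1, u2, w1, w2, a, hc]
  have hvabs : v1 - v2 ≤ |v1 - v2| ∧ -(|v1 - v2|) ≤ v1 - v2 :=
    ⟨le_abs_self _, neg_abs_le _⟩
  have hxabs : x1 - x2 ≤ |x1 - x2| ∧ -(|x1 - x2|) ≤ x1 - x2 :=
    ⟨le_abs_self _, neg_abs_le _⟩
  have hA : |(p x1 - p x2) * (x1 - x2)| ≤ K * (x1 - x2) ^ 2 := by
    rw [abs_mul]
    nlinarith [mul_le_mul_of_nonneg_right hΔp hxa]
  have hB : |(p x1 - p x2) * (v1 - v2)| ≤ K * |x1 - x2| * |v1 - v2| := by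
    rw [abs_mul]
    exact mul_le_mul_of_nonneg_right hΔp (abs_nonneg _)
  have hB' : |(p x1 - p x2) * (v1 - v2)| ≤ K / 2 * ((x1 - x2) ^ 2 + (v1 - v2) ^ 2) := by
    nlinarith [sq_nonneg (|x1 - x2| - |v1 - v2|), sq_abs (x1 - x2), sq_abs (v1 - v2)]
  have hA' := neg_abs_le ((p x1 - p x2) * (x1 - x2))
  have hB'' := neg_abs_le ((p x1 - p x2) * (v1 - v2))
  have e1 : b * ((p x1 - p x2) * (x1 - x2)) ≥ -(b * (K * (x1 - x2) ^ 2)) := by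
    have := (neg_le_neg hA).trans hA'
    nlinarith
  have e2 : 2 * b * ((p x1 - p x2) * (v1 - v2))
      ≥ -(2 * b * (K / 2 * ((x1 - x2) ^ 2 + (v1 - v2) ^ 2))) := by
    have := (neg_le_neg hB').trans hB''
    nlinarith
  have e3 : 2 * b * κ1 * (x1 - x2) ^ 2 ≤ b * (α - 2 * K) * (x1 - x2) ^ 2 := by
    nlinarith [mul_le_mul_of_nonneg_right h2 (sq_nonneg (x1 - x2))]
  have e4 : 2 * b * κ1 * (v1 - v2) ^ 2 ≤ b * (1 - 2 * K) * (v1 - v2) ^ 2 := by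
    nlinarith [mul_le_mul_of_nonneg_right h1 (sq_nonneg (v1 - v2))]
  have key : -((v1 - v2) * ((b + 2 * b * α) * (x1 - x2) + b * (v1 - v2)) +
      (-(α * x1 + p x1) - v1 - (-(α * x2 + p x2) - v2)) * (b * (x1 - x2) + 2 * b * (v1 - v2)))
      = b * (v1 - v2) ^ 2 + α * b * (x1 - x2) ^ 2 + b * ((p x1 - p x2) * (x1 - x2))
        + 2 * b * ((p x1 - p x2) * (v1 - v2)) := by ring
  rw [key]
  nlinarith [e1, e2, e3, e4,
    mul_nonneg (mul_nonneg hb.le hK0) (sq_nonneg (v1 - v2)),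
    mul_nonneg (mul_nonneg hb.le hK0) (sq_nonneg (x1 - x2))]
end
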